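/- Let (θ₁; q₁, …, q_h) be a characteristic sequence and let (e_i)_{0≤i≤r} be the associated multiplicity sequence obtained by running the Euclidean algorithm: e₀ = min(θ₁, q₁) repeated appropriately, etc. Then (q₁ − 1)(θ₁ − 1) + Σ_{j=2}^{h} q_j(θ_j − 1) = Σ_{i=0}^{r} e_i(e_i − 1), where θ_j = gcd(θ₁, q₁, …, q_{j-1}). -/

import Mathlib

/-- The multiplicity sequence obtained by the Hamburger–Noether / Euclidean
algorithm from a pair `(a, b)` together with a list of further characteristic
entries: the multiplicity at each step is `min a b`; one subtracts the smaller
from the larger, and when the two entries agree (an exact division has been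
reached) the next characteristic entry is brought in. -/
def hnMultSeq (a b : ℕ) (rest : List ℕ) : List ℕ :=
  if a = 0 ∨ b = 0 then []
  else if a < b then a :: hnMultSeq a (b - a) rest
  else if b < a then b :: hnMultSeq (a - b) b rest
  else
    match rest with
    | [] => [a]
    | q :: rest' => a :: hnMultSeq a q rest'
termination_by (a + b + rest.sum + rest.length)
decreasing_by
  · simp_all; omega
  · simp_all; omega
  · simp_all [List.sum_cons]; omega

/-- Lipman's conductor formula expressed via the characteristic sequence
`(θ₁; q₁, …, q_h)`: with `θ_j = gcd(θ₁, q₁, …, q_{j-1})` (so `θ_{h+1} = 1`)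
and `(e_i)_{0 ≤ i ≤ r}` the multiplicity sequence obtained from
`(θ₁; q₁,…,q_h)` by the Euclidean algorithm,
`(q₁ − 1)(θ₁ − 1) + Σ_{j=2}^{h} q_j (θ_j − 1) = Σ_{i=0}^{r} e_i (e_i − 1)`. -/
def Tfun : ℕ → List ℕ → ℤ
  | _, [] => 0
  | g, x :: L => (g : ℤ) * x - g - x + Nat.gcd g x + Tfun (Nat.gcd g x) L

lemma keyF : ∀ (a b : ℕ) (L : List ℕ), 0 < a → 0 < b → (∀ x ∈ L, 0 < x) →
    ((hnMultSeq a b L).map fun e : ℕ => (e : ℤ) * ((e : ℤ) - 1)).sum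
      = (a : ℤ) * b - a - b + Nat.gcd a b + Tfun (Nat.gcd a b) L := by
  intro a b L
  induction a, b, L using hnMultSeq.induct with
  | case1 a b L h => intro ha hb _; omega
  | case2 a b L h hab IH =>
      intro ha hb hL
      rw [hnMultSeq.eq_def]; simp only [if_neg h, if_pos hab]
      simp only [List.map_cons, List.sum_cons]
      rw [IH ha (by omega) hL,
        Nat.gcd_sub_self_right (le_of_lt hab)]
      have : ((b - a : ℕ) : ℤ) = (b : ℤ) - a := by push_cast [Nat.le_of_lt hab]; ring
      rw [this]; ring
  | case3 a b L h h1 hab IH =>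
      intro ha hb hL
      rw [hnMultSeq.eq_def]; simp only [if_neg h, if_neg h1, if_pos hab]
      simp only [List.map_cons, List.sum_cons]
      rw [IH (by omega) hb hL,
        Nat.gcd_sub_self_left (le_of_lt hab)]
      have : ((a - b : ℕ) : ℤ) = (a : ℤ) - b := by push_cast [Nat.le_of_lt hab]; ring
      rw [this]; ring
  | case4 a b h h1 h2 =>
      intro ha hb _
      have hab : a = b := by omega
      subst hab
      rw [hnMultSeq.eq_def]; simp only [if_neg h, if_neg h1, if_neg h2]
      simp [Tfun, Nat.gcd_self]
      ring
  | case5 a b h h1 h2 x L IH =>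
      intro ha hb hL
      have hab : a = b := by omega
      subst hab
      rw [hnMultSeq.eq_def]; simp only [if_neg h, if_neg h1, if_neg h2]
      rw [List.map_cons, List.sum_cons,
        IH ha (hL x (by simp)) (fun y hy => hL y (by simp [hy]))]
      simp [Tfun, Nat.gcd_self]
      ring

lemma gcd_range_succ (w : ℕ → ℕ) (j : ℕ) :
    (Finset.range (j+1+1)).gcd w = Nat.gcd ((Finset.range (j+1)).gcd w) (w (j+1)) := by
  rw [Finset.range_add_one, Finset.gcd_insert]
  exact Nat.gcd_comm _ _

lemma T_spec (w : ℕ → ℕ) : ∀ (m j : ℕ),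
    Tfun ((Finset.range (j+1)).gcd w) ((List.range m).map fun k => w (j+1+k))
      = ∑ i ∈ Finset.range m,
          ((((Finset.range (j+1+i)).gcd w : ℕ) : ℤ) * w (j+1+i)
            - (((Finset.range (j+1+i)).gcd w : ℕ) : ℤ) - w (j+1+i)
            + (((Finset.range (j+2+i)).gcd w : ℕ) : ℤ)) := by
  intro m
  induction m with
  | zero => intro j; simp [Tfun]
  | succ m IH =>
    intro j
    rw [List.range_succ_eq_map, List.map_cons, List.map_map]
    have hcomp : ((fun k => w (j+1+k)) ∘ Nat.succ) = fun k => w (j+1+1+k) := by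
      funext k
      simp only [Function.comp]
      congr 1
      omega
    rw [hcomp, Tfun, ← gcd_range_succ w j, IH (j+1)]
    rw [Finset.sum_range_succ' _ m]
    have hidx1 : ∀ i : ℕ, j+1+1+i = j+1+(i+1) := by intro i; omega
    have hidx2 : ∀ i : ℕ, j+1+1+1+i = j+2+(i+1) := by intro i; omega
    simp only [hidx1, hidx2]
    have : j + 2 + 0 = j + 1 + 1 := by omega
    simp only [Nat.add_zero, this]
    ring

lemma coe_map_sum (l : List ℕ) :
    ((l : List ℤ).map fun e => (e : ℤ) * ((e : ℤ) - 1))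
      = l.map fun e : ℕ => (e : ℤ) * ((e : ℤ) - 1) := by
  simp only [bind_pure_comp, List.map_eq_map, List.map_map]
  rfl

theorem lipman_formula_via_characteristic_sequence (θ₁ h : ℕ) (q : ℕ → ℕ)
    (hh : 1 ≤ h) (hθ : 0 < θ₁)
    (hq : ∀ j, 1 ≤ j → j ≤ h → 0 < q j)
    (w : ℕ → ℕ) (hw : w = fun i => if i = 0 then θ₁ else q i)
    (hone : (Finset.range (h + 1)).gcd w = 1) :
    ((q 1 : ℤ) - 1) * ((θ₁ : ℤ) - 1) +
        ∑ j ∈ Finset.Icc 2 h,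
          (q j : ℤ) * ((((Finset.range j).gcd w : ℕ) : ℤ) - 1)
      = ((hnMultSeq θ₁ (q 1) ((List.range (h - 1)).map fun j => q (j + 2))).map
          fun e => (e : ℤ) * ((e : ℤ) - 1)).sum := by
  have hw0 : w 0 = θ₁ := by simp [hw]
  have hwn : ∀ j : ℕ, w (j + 1) = q (j + 1) := by intro j; simp [hw]
  -- the list
  have hLw : ((List.range (h - 1)).map fun j => q (j + 2))
      = (List.range (h - 1)).map fun k => w (1 + 1 + k) := by
    apply List.map_congr_left
    intro k _
    have : 1 + 1 + k = (k + 1) + 1 := by omega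
    rw [this, hwn]
  have hLpos : ∀ x ∈ (List.range (h - 1)).map fun j => q (j + 2), 0 < x := by
    intro x hx
    simp only [List.mem_map, List.mem_range] at hx
    obtain ⟨j, hj, rfl⟩ := hx
    exact hq (j + 2) (by omega) (by omega)
  have hg2 : Nat.gcd θ₁ (q 1) = (Finset.range 2).gcd w := by
    have h1 : (Finset.range (0 + 1 + 1)).gcd w
        = Nat.gcd ((Finset.range (0 + 1)).gcd w) (w (0 + 1)) := gcd_range_succ w 0
    norm_num at h1
    rw [h1]
    rw [hw0, show w 1 = q 1 from hwn 0]
  rw [coe_map_sum, keyF θ₁ (q 1) _ hθ (hq 1 le_rfl hh) hLpos, hg2, hLw]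
  have hT := T_spec w (h - 1) 1
  have e1 : ∀ i : ℕ, 1 + 1 + i = 2 + i := by intro i; omega
  have e2 : ∀ i : ℕ, 1 + 2 + i = 3 + i := by intro i; omega
  simp only [e1, e2] at hT
  have e1' : (1 + 1 : ℕ) = 2 := rfl
  rw [e1'] at hT
  rw [hT]
  -- left-hand sum over Icc
  rw [show Finset.Icc 2 h = Finset.Ico 2 (h+1) from (Finset.Ico_add_one_right_eq_Icc (a := 2) (b := h)).symm,
    Finset.sum_Ico_eq_sum_range, show h + 1 - 2 = h - 1 from by omega]
  -- telescoping
  have tel := Finset.sum_range_sub (fun i => (((Finset.range (2 + i)).gcd w : ℕ) : ℤ)) (h - 1)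
  simp only [show ∀ i : ℕ, 2 + (i + 1) = 3 + i from fun i => by omega] at tel
  rw [show 2 + (h - 1) = h + 1 from by omega, hone] at tel
  have split : ∑ i ∈ Finset.range (h - 1),
      ((((Finset.range (2 + i)).gcd w : ℕ) : ℤ) * w (2 + i)
        - (((Finset.range (2 + i)).gcd w : ℕ) : ℤ) - w (2 + i)
        + (((Finset.range (3 + i)).gcd w : ℕ) : ℤ))
      = (∑ i ∈ Finset.range (h - 1),
          (q (2 + i) : ℤ) * ((((Finset.range (2 + i)).gcd w : ℕ) : ℤ) - 1))
        + ∑ i ∈ Finset.range (h - 1),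
          ((((Finset.range (3 + i)).gcd w : ℕ) : ℤ)
            - (((Finset.range (2 + i)).gcd w : ℕ) : ℤ)) := by
    rw [← Finset.sum_add_distrib]
    apply Finset.sum_congr rfl
    intro i _
    have : w (2 + i) = q (2 + i) := by
      rw [show 2 + i = (i + 1) + 1 from by omega, hwn]
    rw [this]
    ring
  rw [split, tel]
  push_cast
  ring
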